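/- Let X be a separable complex Banach space and let T be a bounded linear operator on X. Suppose there exists a real number p ≥ 1 such that both A = span{x ∈ X : Tx = αx for some α ∈ ℂ with |α| < p} and B = span{y ∈ X : Ty = λy for some λ ∈ ℂ with |λ| > p} are dense in X. Then T is compound. -/

import Mathlib

open Filter Topology Set Pointwise

variable {X : Type*} [NormedAddCommGroup X] [NormedSpace ℂ X]

/-- `T` is compound: for all nonempty open `U, V` there are `N` and scalars `α n`
with `0 < ‖α n‖ ≤ 1` such that `T^n (α n • U) ∩ V ≠ ∅` for all `n ≥ N`. -/
def Compound (T : X →L[ℂ] X) : Prop :=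
  ∀ U V : Set X, IsOpen U → U.Nonempty → IsOpen V → V.Nonempty →
    ∃ N : ℕ, ∃ α : ℕ → ℂ, ∀ n ≥ N,
      (0 < ‖α n‖ ∧ ‖α n‖ ≤ 1) ∧ (((T ^ n) '' (α n • U)) ∩ V).Nonempty

/-- `T` is topologically mixing. -/
def TopologicallyMixing (T : X →L[ℂ] X) : Prop :=
  ∀ U V : Set X, IsOpen U → U.Nonempty → IsOpen V → V.Nonempty →
    ∃ N : ℕ, ∀ n ≥ N, (((T ^ n) '' U) ∩ V).Nonempty

/-- `T` is disk transitive. -/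
def DiskTransitive (T : X →L[ℂ] X) : Prop :=
  ∀ U V : Set X, IsOpen U → U.Nonempty → IsOpen V → V.Nonempty →
    ∃ n : ℕ, ∃ α : ℂ, 0 < ‖α‖ ∧ ‖α‖ ≤ 1 ∧ (((T ^ n) '' (α • U)) ∩ V).Nonempty

/-- The direct sum `T 0 ⊕ ⋯ ⊕ T (k-1)` is `k`-bitransitive: for all nonempty open
`U i, V i` there are `n` and scalars `α i` with `0 < ‖α i‖ ≤ 1` such that
`(T 0 ⊕ ⋯)^n (α 0 • U 0 ⊕ ⋯) ∩ (V 0 ⊕ ⋯) ≠ ∅`, stated componentwise (an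
intersection of product sets is nonempty iff each componentwise intersection is). -/
def kBitransitive {k : ℕ} (T : Fin k → X →L[ℂ] X) : Prop :=
  ∀ U V : Fin k → Set X,
    (∀ i, IsOpen (U i) ∧ (U i).Nonempty) →
    (∀ i, IsOpen (V i) ∧ (V i).Nonempty) →
    ∃ n : ℕ, ∃ α : Fin k → ℂ,
      (∀ i, 0 < ‖α i‖ ∧ ‖α i‖ ≤ 1) ∧
      ∀ i, (((T i ^ n) '' (α i • U i)) ∩ V i).Nonempty

/-- The cross set `C_T(A,B)`. -/
def crossSet (T : X →L[ℂ] X) (A B : Set X) : Set ℕ :=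
  {n | ∃ α : ℂ, 0 < ‖α‖ ∧ ‖α‖ ≤ 1 ∧ (((T ^ n) '' (α • A)) ∩ B).Nonempty}

/-- The junction set `J_T(A,B)`. -/
def junctionSet (T : X →L[ℂ] X) (A B : Set X) : Set (ℕ × ℂ) :=
  {p | 0 < ‖p.2‖ ∧ ‖p.2‖ ≤ 1 ∧ (((T ^ p.1) '' (p.2 • A)) ∩ B).Nonempty}

/-- A subset of `ℕ × ℂ` is bifinite if it contains `{(n, a n) : n ∈ K}` for some
cofinite `K ⊆ ℕ` and some sequence `a : ℕ → ℂ`. -/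
def Bifinite (A : Set (ℕ × ℂ)) : Prop :=
  ∃ K : Set ℕ, Kᶜ.Finite ∧ ∃ a : ℕ → ℂ, ∀ n ∈ K, (n, a n) ∈ A


private lemma pow_apply_eig {X : Type*} [NormedAddCommGroup X] [NormedSpace ℂ X]
    (T : X →L[ℂ] X) (l : ℂ) (v : X) (h : T v = l • v) (n : ℕ) :
    (T ^ n) v = l ^ n • v := by
  induction n with
  | zero => simp
  | succ n ih =>
    rw [pow_succ, ContinuousLinearMap.mul_apply, h, map_smul, ih, smul_smul, pow_succ]
    ring_nf

/-- Godefroy–Shapiro type criterion for compound operators. -/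
theorem compound_of_dense_eigenvector_spans
    {X : Type*} [NormedAddCommGroup X] [NormedSpace ℂ X] [CompleteSpace X]
    [TopologicalSpace.SeparableSpace X] (T : X →L[ℂ] X) (p : ℝ) (hp : 1 ≤ p)
    (hA : Dense ((Submodule.span ℂ {x : X | ∃ α : ℂ, ‖α‖ < p ∧ T x = α • x} :
      Submodule ℂ X) : Set X))
    (hB : Dense ((Submodule.span ℂ {y : X | ∃ l : ℂ, p < ‖l‖ ∧ T y = l • y} :
      Submodule ℂ X) : Set X)) :
    Compound T := by
  classical
  intro U V hUo hUne hVo hVne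
  have hp0 : (0:ℝ) < p := lt_of_lt_of_le one_pos hp
  have hpC : (p:ℂ) ≠ 0 := by
    exact_mod_cast (ne_of_gt hp0)
  obtain ⟨x, hxA, hxU⟩ := hA.exists_mem_open hUo hUne
  obtain ⟨y, hyB, hyV⟩ := hB.exists_mem_open hVo hVne
  rw [SetLike.mem_coe, Submodule.mem_span_set] at hxA hyB
  obtain ⟨c, hc_supp, hc_sum⟩ := hxA
  obtain ⟨d, hd_supp, hd_sum⟩ := hyB
  set a : X → ℂ := fun i => if h : ∃ α : ℂ, ‖α‖ < p ∧ T i = α • i then h.choose else 0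
    with ha_def
  set l : X → ℂ := fun j => if h : ∃ lam : ℂ, p < ‖lam‖ ∧ T j = lam • j then h.choose else 0
    with hl_def
  have ha : ∀ i ∈ c.support, ‖a i‖ < p ∧ T i = a i • i := by
    intro i hi
    have h' : ∃ α : ℂ, ‖α‖ < p ∧ T i = α • i := hc_supp (Finset.mem_coe.mpr hi)
    simp only [ha_def, dif_pos h']
    exact h'.choose_spec
  have hl : ∀ j ∈ d.support, p < ‖l j‖ ∧ T j = l j • j := by
    intro j hj
    have h' : ∃ lam : ℂ, p < ‖lam‖ ∧ T j = lam • j := hd_supp (Finset.mem_coe.mpr hj)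
    simp only [hl_def, dif_pos h']
    exact h'.choose_spec
  set w : ℕ → X := fun n => x + ∑ j ∈ d.support, (((p:ℂ) / l j) ^ n * d j) • j with hw_def
  set g : ℕ → X := fun n => (∑ i ∈ c.support, ((a i / (p:ℂ)) ^ n * c i) • i) + y with hg_def
  -- w tends to x
  have hw_tendsto : Tendsto w atTop (𝓝 x) := by
    have hterm : ∀ j ∈ d.support,
        Tendsto (fun n : ℕ => (((p:ℂ) / l j) ^ n * d j) • j) atTop (𝓝 (0:X)) := by
      intro j hj
      have hlt : ‖(p:ℂ) / l j‖ < 1 := by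
        have h1 := (hl j hj).1
        have hljpos : (0:ℝ) < ‖l j‖ := lt_trans hp0 h1
        rw [norm_div, Complex.norm_real, Real.norm_eq_abs, abs_of_pos hp0,
          div_lt_one hljpos]
        exact h1
      have h0 : Tendsto (fun n : ℕ => ((p:ℂ) / l j) ^ n) atTop (𝓝 0) :=
        tendsto_pow_atTop_nhds_zero_of_norm_lt_one hlt
      have := h0.smul_const ((d j) • j)
      simpa [mul_smul] using this
    have hsum : Tendsto (fun n => ∑ j ∈ d.support, (((p:ℂ) / l j) ^ n * d j) • j)
        atTop (𝓝 (0:X)) := by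
      simpa using tendsto_finset_sum d.support hterm
    have := (tendsto_const_nhds : Tendsto (fun _ : ℕ => x) atTop (𝓝 x)).add hsum
    simpa [hw_def] using this
  have hg_tendsto : Tendsto g atTop (𝓝 y) := by
    have hterm : ∀ i ∈ c.support,
        Tendsto (fun n : ℕ => ((a i / (p:ℂ)) ^ n * c i) • i) atTop (𝓝 (0:X)) := by
      intro i hi
      have hlt : ‖a i / (p:ℂ)‖ < 1 := by
        rw [norm_div, Complex.norm_real, Real.norm_eq_abs, abs_of_pos hp0,
          div_lt_one hp0]
        exact (ha i hi).1
      have h0 : Tendsto (fun n : ℕ => (a i / (p:ℂ)) ^ n) atTop (𝓝 0) :=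
        tendsto_pow_atTop_nhds_zero_of_norm_lt_one hlt
      have := h0.smul_const ((c i) • i)
      simpa [mul_smul] using this
    have hsum : Tendsto (fun n => ∑ i ∈ c.support, ((a i / (p:ℂ)) ^ n * c i) • i)
        atTop (𝓝 (0:X)) := by
      simpa using tendsto_finset_sum c.support hterm
    have := hsum.add (tendsto_const_nhds : Tendsto (fun _ : ℕ => y) atTop (𝓝 y))
    simpa [hg_def] using this
  -- key algebraic identity
  have key : ∀ n : ℕ, (T ^ n) ((((p:ℂ))⁻¹ ^ n) • w n) = g n := by
    intro n
    have hTx : (T ^ n) x = ∑ i ∈ c.support, (c i * a i ^ n) • i := by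
      rw [← hc_sum, Finsupp.sum, map_sum]
      refine Finset.sum_congr rfl (fun i hi => ?_)
      rw [map_smul, pow_apply_eig T (a i) i (ha i hi).2 n, smul_smul]
    have hTw : (T ^ n) (w n) = (T ^ n) x + (p:ℂ) ^ n • y := by
      simp only [hw_def, map_add, map_sum, map_smul]
      congr 1
      rw [← hd_sum, Finsupp.sum, Finset.smul_sum]
      refine Finset.sum_congr rfl (fun j hj => ?_)
      rw [pow_apply_eig T (l j) j (hl j hj).2 n, smul_smul, smul_smul]
      congr 1
      have hlj0 : l j ≠ 0 := by
        intro h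
        have := (hl j hj).1
        rw [h] at this; simp at this
        linarith
      rw [div_pow, div_mul_eq_mul_div, div_mul_cancel₀ _ (pow_ne_zero n hlj0)]
    rw [map_smul, hTw, smul_add, hTx, Finset.smul_sum, hg_def]
    congr 1
    · refine Finset.sum_congr rfl (fun i hi => ?_)
      rw [smul_smul]
      congr 1
      rw [div_pow, div_eq_mul_inv, inv_pow]
      ring
    · rw [smul_smul, ← mul_pow, inv_mul_cancel₀ hpC, one_pow, one_smul]
  -- eventual membership
  have hU' : ∀ᶠ n in atTop, w n ∈ U := hw_tendsto.eventually (hUo.mem_nhds hxU)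
  have hV' : ∀ᶠ n in atTop, g n ∈ V := hg_tendsto.eventually (hVo.mem_nhds hyV)
  obtain ⟨N, hN⟩ := (hU'.and hV').exists_forall_of_atTop
  refine ⟨N, fun n => ((p:ℂ))⁻¹ ^ n, fun n hn => ?_⟩
  obtain ⟨hwU, hgV⟩ := hN n hn
  have hnorm : ‖((p:ℂ))⁻¹ ^ n‖ = (p⁻¹) ^ n := by
    rw [norm_pow, norm_inv, Complex.norm_real, Real.norm_eq_abs, abs_of_pos hp0]
  constructor
  · constructor
    · rw [hnorm]
      exact pow_pos (inv_pos.mpr hp0) n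
    · rw [hnorm]
      exact pow_le_one₀ (inv_nonneg.mpr hp0.le) (inv_le_one_of_one_le₀ hp)
  · exact ⟨g n, ⟨(((p:ℂ))⁻¹ ^ n) • w n, smul_mem_smul_set hwU, key n⟩, hgV⟩
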